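/- Let u : ℕ → ℤ satisfy an order-d integer linear recurrence u_{n+d} = a_{d-1} u_{n+d-1} + … + a_0 u_n, and let p be a prime with p > d+1 and p ∤ a_0. Then there exists a positive integer M with 0 < M < p^{d²} such that for every ℓ ∈ {0, …, M−1} there is a continuous function F_ℓ : ℤ_p → ℤ_p satisfying F_ℓ(n) = u_{Mn+ℓ} for every natural number n (here n ∈ ℕ is viewed inside ℤ_p via the canonical embedding). -/

import Mathlib

open Finset

section DvdHelpers

variable {R : Type*} [Ring R]

lemma intCast_dvd_mul_left' (c : ℤ) (a x : R) (h : (c : R) ∣ x) : (c : R) ∣ a * x := by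
  obtain ⟨t, rfl⟩ := h
  exact ⟨a * t, by rw [← mul_assoc, ← (Int.cast_commute c a).eq, mul_assoc]⟩

lemma intCast_pow_dvd_pow' (c : ℤ) (x : R) (h : (c : R) ∣ x) (j : ℕ) :
    ((c ^ j : ℤ) : R) ∣ x ^ j := by
  obtain ⟨t, rfl⟩ := h
  refine ⟨t ^ j, ?_⟩
  rw [(Int.cast_commute c t).mul_pow]
  push_cast
  ring_nf

lemma geom_dvd (c : ℤ) (z : R) (h : (c : R) ∣ z - 1) : ∀ s : ℕ, (c : R) ∣ z ^ s - 1 := by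
  intro s
  induction s with
  | zero => simp
  | succ s ih =>
      have hz : z ^ (s + 1) - 1 = z ^ s * (z - 1) + (z ^ s - 1) := by
        rw [pow_succ, mul_sub, mul_one]; abel
      rw [hz]
      exact dvd_add (intCast_dvd_mul_left' c _ _ h) ih

/-- Binomial lifting-the-exponent step. -/
lemma binom_step (p : ℕ) (hp : p.Prime) (k : ℕ) (y : R)
    (h : (((p : ℤ) ^ (k + 1) : ℤ) : R) ∣ y) :
    (((p : ℤ) ^ (k + 2) : ℤ) : R) ∣ (1 + y) ^ p - 1 := by
  rw [(Commute.one_left y).add_pow p, Finset.sum_range_succ]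
  simp only [Nat.choose_self, Nat.cast_one, mul_one, one_pow, one_mul, Nat.sub_self, pow_zero]
  rw [add_sub_cancel_right]
  refine Finset.dvd_sum ?_
  intro m hm
  rw [Finset.mem_range] at hm
  by_cases hj : 2 ≤ p - m
  · refine Dvd.dvd.mul_right (dvd_trans ?_ (intCast_pow_dvd_pow' _ _ h (p - m))) _
    have h1 : ((p : ℤ) ^ (k + 1)) ^ (p - m) = (p : ℤ) ^ ((k + 1) * (p - m)) := by
      rw [← pow_mul]
    rw [h1]
    exact map_dvd (Int.castRingHom R) (pow_dvd_pow (p : ℤ) (by nlinarith))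
  · have hm1 : p - m = 1 := by omega
    have hmp : m = p - 1 := by omega
    have hchoose : (p : ℕ).choose m = p := by
      subst hmp
      have h1 : p - (p - 1) = 1 := by omega
      rw [← Nat.choose_symm (by omega : p - 1 ≤ p), h1, Nat.choose_one_right]
    rw [hm1, pow_one, hchoose]
    obtain ⟨t, rfl⟩ := h
    refine ⟨t, ?_⟩
    push_cast
    rw [mul_assoc, ← (Nat.cast_commute p t).eq, ← mul_assoc, ← pow_succ]

end DvdHelpers

section Matrices

lemma matrix_intCast_mul {n : Type*} [Fintype n] [DecidableEq n] (c : ℤ)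
    (C : Matrix n n ℤ) : ((c : ℤ) : Matrix n n ℤ) * C = c • C := by
  rw [← zsmul_eq_mul]

lemma matrix_dvd_iff {n : Type*} [Fintype n] [DecidableEq n] (c : ℤ) (X : Matrix n n ℤ) :
    ((c : ℤ) : Matrix n n ℤ) ∣ X ↔ ∀ i j, c ∣ X i j := by
  constructor
  · rintro ⟨C, rfl⟩ i j
    rw [matrix_intCast_mul]
    exact ⟨C i j, by simp⟩
  · intro h
    refine ⟨Matrix.of fun i j => X i j / c, ?_⟩
    rw [matrix_intCast_mul]
    ext i j
    simp only [Matrix.smul_apply, Matrix.of_apply, smul_eq_mul]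
    exact (Int.mul_ediv_cancel' (h i j)).symm

/-- The companion matrix of the recurrence. -/
def compA (d : ℕ) (a : Fin d → ℤ) : Matrix (Fin d) (Fin d) ℤ :=
  Matrix.of fun i j =>
    if h : (i : ℕ) + 1 < d then (if j = (⟨(i : ℕ) + 1, h⟩ : Fin d) then 1 else 0) else a j

lemma compA_mulVec (d : ℕ) (hd : 0 < d) (a : Fin d → ℤ) (u : ℕ → ℤ)
    (hrec : ∀ n : ℕ, u (n + d) = ∑ i : Fin d, a i * u (n + i)) (n : ℕ) :
    (compA d a).mulVec (fun i => u (n + i)) = fun i : Fin d => u (n + 1 + (i : ℕ)) := by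
  funext i
  simp only [Matrix.mulVec, dotProduct, compA, Matrix.of_apply]
  by_cases h : (i : ℕ) + 1 < d
  · simp only [dif_pos h, ite_mul, one_mul, zero_mul]
    rw [Finset.sum_ite_eq' Finset.univ (⟨(i : ℕ) + 1, h⟩ : Fin d) (fun j => u (n + j))]
    simp only [Finset.mem_univ, if_pos]
    congr 1
    omega
  · have hi : (i : ℕ) = d - 1 := by have := i.isLt; omega
    simp only [dif_neg h]
    rw [← hrec n]
    congr 1
    omega

lemma compA_pow_mulVec (d : ℕ) (hd : 0 < d) (a : Fin d → ℤ) (u : ℕ → ℤ)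
    (hrec : ∀ n : ℕ, u (n + d) = ∑ i : Fin d, a i * u (n + i)) (n t : ℕ) :
    ((compA d a) ^ t).mulVec (fun i => u (n + i)) = fun i : Fin d => u (n + t + (i : ℕ)) := by
  induction t with
  | zero => simp
  | succ t ih =>
      rw [pow_succ', ← Matrix.mulVec_mulVec, ih, compA_mulVec d hd a u hrec (n + t)]
      rfl

end Matrices

lemma compA_isUnit (p d : ℕ) [hp : Fact p.Prime] (hd : 0 < d) (a : Fin d → ℤ)
    (ha0 : ¬ ((p : ℤ) ∣ a ⟨0, hd⟩)) :
    IsUnit ((compA d a).map (Int.cast : ℤ → ZMod p)) := by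
  haveI : NeZero d := ⟨hd.ne'⟩
  set a0 : ZMod p := ((a ⟨0, hd⟩ : ℤ) : ZMod p) with ha0def
  have h0 : a0 ≠ 0 := by
    rw [ha0def, Ne, ZMod.intCast_zmod_eq_zero_iff_dvd]
    exact_mod_cast ha0
  have hzero : (0 : Fin d) = ⟨0, hd⟩ := by ext; simp
  set B : Matrix (Fin d) (Fin d) (ZMod p) := Matrix.of fun i j =>
    if (i : ℕ) = 0 then
      (if hj : (j : ℕ) = d - 1 then a0⁻¹
       else -(a0⁻¹ * ((a ⟨(j : ℕ) + 1, by have := j.isLt; omega⟩ : ℤ) : ZMod p)))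
    else (if (i : ℕ) = (j : ℕ) + 1 then 1 else 0) with hB
  apply (Matrix.isUnit_iff_isUnit_det _).mpr (Matrix.isUnit_det_of_right_inverse (B := B) ?_)
  ext i j
  rw [Matrix.mul_apply]
  by_cases hi : (i : ℕ) + 1 < d
  · simp only [Matrix.map_apply, compA, Matrix.of_apply, dif_pos hi,
      apply_ite (Int.cast : ℤ → ZMod p), Int.cast_one, Int.cast_zero, ite_mul, one_mul, zero_mul]
    rw [Finset.sum_ite_eq' Finset.univ (⟨(i : ℕ) + 1, hi⟩ : Fin d) (fun k => B k j)]
    simp only [Finset.mem_univ, if_pos, hB, Matrix.of_apply]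
    rw [if_neg (by simp), Matrix.one_apply]
    by_cases hij : i = j
    · subst hij; rw [if_pos (by simp), if_pos rfl]
    · rw [if_neg (by simpa [Fin.ext_iff] using fun h => hij (Fin.ext (by omega))), if_neg hij]
  · have hi1 : (i : ℕ) = d - 1 := by have := i.isLt; omega
    simp only [Matrix.map_apply, compA, Matrix.of_apply, dif_neg hi]
    rw [← Finset.sum_erase_add _ _ (Finset.mem_univ (0 : Fin d))]
    have hB0 : ∀ k ∈ Finset.univ.erase (0 : Fin d),
        ((a k : ℤ) : ZMod p) * B k j
          = if (k : ℕ) = (j : ℕ) + 1 then ((a k : ℤ) : ZMod p) else 0 := by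
      intro k hk
      have hk0 : (k : ℕ) ≠ 0 := by
        intro h
        exact (Finset.mem_erase.mp hk).1 (Fin.ext (by simp [h]))
      rw [hB]
      simp only [Matrix.of_apply, if_neg hk0]
      by_cases hkj : (k : ℕ) = (j : ℕ) + 1
      · rw [if_pos hkj, if_pos hkj, mul_one]
      · rw [if_neg hkj, if_neg hkj, mul_zero]
    rw [Finset.sum_congr rfl hB0]
    by_cases hjd : (j : ℕ) = d - 1
    · have hsum0 : ∑ k ∈ Finset.univ.erase (0 : Fin d),
          (if (k : ℕ) = (j : ℕ) + 1 then ((a k : ℤ) : ZMod p) else 0) = 0 := by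
        apply Finset.sum_eq_zero
        intro k _
        rw [if_neg (by have := k.isLt; omega)]
      rw [hsum0, zero_add, hB]
      simp only [Matrix.of_apply, Fin.val_zero, if_pos rfl, dif_pos hjd, hzero, if_true]
      rw [← ha0def, mul_inv_cancel₀ h0, Matrix.one_apply, if_pos (Fin.ext (by omega))]
    · have hj1 : (j : ℕ) + 1 < d := by have := j.isLt; omega
      have hsum : ∑ k ∈ Finset.univ.erase (0 : Fin d),
          (if (k : ℕ) = (j : ℕ) + 1 then ((a k : ℤ) : ZMod p) else 0)
            = ((a ⟨(j : ℕ) + 1, hj1⟩ : ℤ) : ZMod p) := by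
        have : ∀ k : Fin d, ((k : ℕ) = (j : ℕ) + 1) = (k = ⟨(j : ℕ) + 1, hj1⟩) := by
          intro k; rw [Fin.ext_iff]
        simp only [this]
        rw [Finset.sum_ite_eq' (Finset.univ.erase (0 : Fin d)) (⟨(j : ℕ) + 1, hj1⟩ : Fin d)
          (fun k => ((a k : ℤ) : ZMod p))]
        rw [if_pos (Finset.mem_erase.mpr ⟨fun h => absurd (congrArg Fin.val h) (by simp only [Fin.val_zero, Fin.val_mk]; omega), Finset.mem_univ _⟩)]
      rw [hsum, hB]
      simp only [Matrix.of_apply, Fin.val_zero, if_pos rfl, dif_neg hjd, hzero, if_true]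
      rw [← ha0def, mul_neg, ← mul_assoc, mul_inv_cancel₀ h0, one_mul, add_neg_cancel,
        Matrix.one_apply, if_neg (fun h => hjd (by rw [← h]; omega))]

lemma exists_M (p d : ℕ) [hp : Fact p.Prime] (hd : 0 < d) (a : Fin d → ℤ)
    (ha0 : ¬ ((p : ℤ) ∣ a ⟨0, hd⟩)) :
    ∃ M : ℕ, 0 < M ∧ M < p ^ (d ^ 2) ∧
      ∀ i j, (p : ℤ) ∣ ((compA d a ^ M - 1) i j) := by
  haveI : NeZero d := ⟨hd.ne'⟩
  obtain ⟨U, hU⟩ := compA_isUnit p d hd a ha0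
  refine ⟨Fintype.card (Matrix (Fin d) (Fin d) (ZMod p))ˣ, Fintype.card_pos, ?_, ?_⟩
  · have h1 : Fintype.card (Matrix (Fin d) (Fin d) (ZMod p))ˣ
        < Fintype.card (Matrix (Fin d) (Fin d) (ZMod p)) := by
      apply Fintype.card_lt_of_injective_of_notMem (Units.val) (fun _ _ h => Units.ext h) (b := 0)
      rintro ⟨V, hV⟩
      have h2 : (1 : Matrix (Fin d) (Fin d) (ZMod p)) = 0 := by
        rw [← V.mul_inv, hV, zero_mul]
      have h3 := congrFun (congrFun h2 ⟨0, hd⟩) ⟨0, hd⟩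
      rw [Matrix.one_apply_eq] at h3
      exact one_ne_zero h3
    have h2 : Fintype.card (Matrix (Fin d) (Fin d) (ZMod p)) = p ^ (d ^ 2) := by
      have h3 : Fintype.card (Matrix (Fin d) (Fin d) (ZMod p))
          = Fintype.card (Fin d → Fin d → ZMod p) := rfl
      rw [h3, Fintype.card_fun, Fintype.card_fun, ZMod.card, Fintype.card_fin, ← pow_mul,
        ← sq d]
    rw [← h2]; exact h1
  · intro i j
    have hU1 : U ^ Fintype.card (Matrix (Fin d) (Fin d) (ZMod p))ˣ = 1 := pow_card_eq_one
    set M := Fintype.card (Matrix (Fin d) (Fin d) (ZMod p))ˣ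
    have hAp : ((compA d a).map (Int.cast : ℤ → ZMod p)) ^ M = 1 := by
      rw [← hU, ← Units.val_pow_eq_pow_val, hU1, Units.val_one]
    have h2 : ((compA d a ^ M - 1).map (Int.cast : ℤ → ZMod p)) = 0 := by
      have h4 := congrArg (fun X => ((Int.castRingHom (ZMod p)).mapMatrix : Matrix (Fin d) (Fin d) ℤ →+* Matrix (Fin d) (Fin d) (ZMod p)) X) (rfl : compA d a ^ M - 1 = compA d a ^ M - 1)
      -- compute directly
      have h5 : ((Int.castRingHom (ZMod p)).mapMatrix : Matrix (Fin d) (Fin d) ℤ →+* _)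
          (compA d a ^ M - 1) = 0 := by
        rw [map_sub, map_pow, map_one]
        rw [RingHom.mapMatrix_apply]
        have : (compA d a).map (Int.castRingHom (ZMod p))
            = (compA d a).map (Int.cast : ℤ → ZMod p) := rfl
        rw [this, hAp, sub_self]
      exact h5
    have h6 : ((compA d a ^ M - 1) i j : ZMod p) = 0 := by
      have := congr_fun (congr_fun h2 i) j
      simpa [Matrix.map_apply] using this
    exact (ZMod.intCast_zmod_eq_zero_iff_dvd _ p).mp h6

lemma key_dvd (p d : ℕ) [hp : Fact p.Prime] (hd : 0 < d) (a : Fin d → ℤ) (u : ℕ → ℤ)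
    (hrec : ∀ n : ℕ, u (n + d) = ∑ i : Fin d, a i * u (n + i)) (M : ℕ)
    (hbase : ∀ i j, (p : ℤ) ∣ ((compA d a ^ M - 1) i j)) (k t N : ℕ) (ht : p ^ k ∣ t) :
    ((p : ℤ) ^ (k + 1)) ∣ u (N + M * t) - u N := by
  -- lifting the exponent for the matrix
  have hlift : ∀ k : ℕ, (((p : ℤ) ^ (k + 1) : ℤ) : Matrix (Fin d) (Fin d) ℤ)
      ∣ ((compA d a ^ M) ^ (p ^ k) - 1) := by
    intro k
    induction k with
    | zero =>
        simp only [pow_zero, pow_one]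
        exact (matrix_dvd_iff _ _).mpr (by simpa using hbase)
    | succ k ih =>
        have h1 : (compA d a ^ M) ^ (p ^ (k + 1))
            = (1 + ((compA d a ^ M) ^ (p ^ k) - 1)) ^ p := by
          have hz : (1 : Matrix (Fin d) (Fin d) ℤ) + ((compA d a ^ M) ^ (p ^ k) - 1)
              = (compA d a ^ M) ^ (p ^ k) := by abel
          rw [hz]
          conv_rhs => rw [← pow_mul, ← pow_succ]
        rw [h1]
        exact binom_step p hp.out k _ ih
  have h1 : (((p : ℤ) ^ (k + 1) : ℤ) : Matrix (Fin d) (Fin d) ℤ)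
      ∣ ((compA d a ^ M) ^ t - 1) := by
    obtain ⟨s, rfl⟩ := ht
    rw [pow_mul]
    exact geom_dvd _ _ (hlift k) s
  set w : Fin d → ℤ := fun i => u (N + i) with hw
  have e1 : u (N + M * t) = (((compA d a ^ M) ^ t).mulVec w) ⟨0, hd⟩ := by
    rw [← pow_mul, compA_pow_mulVec d hd a u hrec N (M * t)]
    simp
  have e2 : u N = w ⟨0, hd⟩ := by simp [hw]
  have e4 : u (N + M * t) - u N = (((compA d a ^ M) ^ t - 1).mulVec w) ⟨0, hd⟩ := by
    rw [e1, Matrix.sub_mulVec, Pi.sub_apply, Matrix.one_mulVec]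
    rw [e2]
  rw [e4]
  simp only [Matrix.mulVec, dotProduct]
  apply Finset.dvd_sum
  intro j _
  exact Dvd.dvd.mul_right ((matrix_dvd_iff ((p : ℤ) ^ (k + 1)) _).mp h1 _ j) _


open Filter Topology

/-- Let `u : ℕ → ℤ` satisfy an order-`d` integer linear recurrence
`u (n+d) = a_{d-1} u (n+d-1) + … + a_0 u n`, and `p` a prime with `p > d + 1` and `p ∤ a_0`.
Then there is `0 < M < p ^ (d^2)` such that for every `ℓ < M`, the subsequence
`n ↦ u (M*n + ℓ)` extends to a continuous function `F_ℓ : ℤ_p → ℤ_p`. -/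
theorem lrs_padic_interpolation (p d : ℕ) [hp : Fact p.Prime] (hd : 0 < d)
    (hpd : d + 1 < p) (a : Fin d → ℤ) (u : ℕ → ℤ)
    (hrec : ∀ n : ℕ, u (n + d) = ∑ i : Fin d, a i * u (n + i))
    (ha0 : ¬ ((p : ℤ) ∣ a ⟨0, hd⟩)) :
    ∃ M : ℕ, 0 < M ∧ M < p ^ (d ^ 2) ∧
      ∀ ℓ < M, ∃ F : ℤ_[p] → ℤ_[p], Continuous F ∧
        ∀ n : ℕ, F (n : ℤ_[p]) = ((u (M * n + ℓ) : ℤ) : ℤ_[p]) := by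
  obtain ⟨M, hM0, hMlt, hbase⟩ := exists_M p d hd a ha0
  refine ⟨M, hM0, hMlt, ?_⟩
  intro ℓ hℓ
  set g : ℕ → ℤ_[p] := fun n => ((u (M * n + ℓ) : ℤ) : ℤ_[p]) with hg
  have hp1 : (1 : ℝ) < p := by exact_mod_cast hp.out.one_lt
  -- the key congruence for the subsequence, as a norm estimate
  have key2 : ∀ k n m : ℕ, m ≤ n → ((p : ℤ) ^ k ∣ (n : ℤ) - (m : ℤ)) →
      (p : ℤ) ^ k ∣ u (M * n + ℓ) - u (M * m + ℓ) := by
    intro k n m hmn hdvd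
    obtain ⟨t, rfl⟩ : ∃ t, n = m + t := ⟨n - m, by omega⟩
    have ht : p ^ k ∣ t := by
      push_cast at hdvd
      have h1 : ((m : ℤ) + t) - m = (t : ℤ) := by ring
      rw [h1] at hdvd
      exact_mod_cast hdvd
    have h2 := key_dvd p d hd a u hrec M hbase k t (M * m + ℓ) ht
    have h3 : M * (m + t) + ℓ = (M * m + ℓ) + M * t := by ring
    rw [h3]
    exact dvd_trans (pow_dvd_pow (p : ℤ) (Nat.le_succ k)) h2
  have hgE : ∀ (k n m : ℕ), ((p : ℤ) ^ k ∣ (n : ℤ) - (m : ℤ)) →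
      ‖g n - g m‖ ≤ (p : ℝ) ^ (-(k : ℤ)) := by
    intro k n m hdvd
    have hcast : g n - g m = (((u (M * n + ℓ) - u (M * m + ℓ) : ℤ)) : ℤ_[p]) := by
      rw [hg]; push_cast; ring
    rw [hcast, PadicInt.norm_int_le_pow_iff_dvd]
    rcases le_total m n with h | h
    · exact key2 k n m h hdvd
    · have h2 := key2 k m n h (by rw [show (m : ℤ) - n = -((n : ℤ) - m) by ring]; exact dvd_neg.mpr hdvd)
      rw [show u (M * n + ℓ) - u (M * m + ℓ) = -(u (M * m + ℓ) - u (M * n + ℓ)) by ring]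
      exact dvd_neg.mpr h2
  have happr : ∀ (x : ℤ_[p]) (k : ℕ), ‖x - ((x.appr k : ℕ) : ℤ_[p])‖ ≤ (p : ℝ) ^ (-(k : ℤ)) :=
    fun x k => (PadicInt.norm_le_pow_iff_mem_span_pow _ _).mpr (PadicInt.appr_spec k x)
  have hmono : ∀ {k i : ℕ}, k ≤ i → (p : ℝ) ^ (-(i : ℤ)) ≤ (p : ℝ) ^ (-(k : ℤ)) := by
    intro k i h
    exact zpow_le_zpow_right₀ hp1.le (by omega)
  have hdvd2 : ∀ (x y : ℤ_[p]) (k i j : ℕ), k ≤ i → k ≤ j →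
      ‖x - y‖ ≤ (p : ℝ) ^ (-(k : ℤ)) →
      (p : ℤ) ^ k ∣ ((x.appr i : ℤ) - (y.appr j : ℤ)) := by
    intro x y k i j hi hj hxy
    rw [← PadicInt.norm_int_le_pow_iff_dvd]
    have hcast : (((x.appr i : ℤ) - (y.appr j : ℤ) : ℤ) : ℤ_[p])
        = ((x.appr i : ℕ) : ℤ_[p]) - ((y.appr j : ℕ) : ℤ_[p]) := by push_cast; ring
    rw [hcast]
    have e : ((x.appr i : ℕ) : ℤ_[p]) - ((y.appr j : ℕ) : ℤ_[p])
        = -(x - ((x.appr i : ℕ) : ℤ_[p])) + ((x - y) + (y - ((y.appr j : ℕ) : ℤ_[p]))) := by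
      ring
    rw [e]
    refine le_trans (PadicInt.nonarchimedean _ _) (max_le ?_ ?_)
    · rw [norm_neg]; exact le_trans (happr x i) (hmono hi)
    · exact le_trans (PadicInt.nonarchimedean _ _)
        (max_le hxy (le_trans (happr y j) (hmono hj)))
  have htend0 : Tendsto (fun k : ℕ => (p : ℝ) ^ (-(k : ℤ))) atTop (𝓝 0) := by
    have he : ∀ k : ℕ, (p : ℝ) ^ (-(k : ℤ)) = ((p : ℝ)⁻¹) ^ k := by
      intro k; rw [zpow_neg, ← inv_zpow, zpow_natCast]
    simp only [he]
    exact tendsto_pow_atTop_nhds_zero_of_lt_one (by positivity)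
      (inv_lt_one_of_one_lt₀ hp1)
  have hcau : ∀ x : ℤ_[p], CauchySeq (fun k => g (x.appr k)) := by
    intro x
    apply cauchySeq_of_le_tendsto_0 (fun k : ℕ => (p : ℝ) ^ (-(k : ℤ))) _ htend0
    intro i j N hi hj
    rw [dist_eq_norm]
    refine hgE N _ _ (hdvd2 x x N i j hi hj ?_)
    rw [sub_self, norm_zero]
    positivity
  have hFex : ∀ x : ℤ_[p], ∃ L, Tendsto (fun k => g (x.appr k)) atTop (𝓝 L) :=
    fun x => cauchySeq_tendsto_of_complete (hcau x)
  choose F hF using hFex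
  refine ⟨F, ?_, ?_⟩
  · rw [Metric.continuous_iff]
    intro x ε hε
    obtain ⟨k, hk⟩ := (htend0.eventually (gt_mem_nhds hε)).exists
    refine ⟨(p : ℝ) ^ (-(k : ℤ)), by positivity, ?_⟩
    intro y hy
    rw [dist_eq_norm]
    have hxy : ‖y - x‖ ≤ (p : ℝ) ^ (-(k : ℤ)) := le_of_lt (by rwa [dist_eq_norm] at hy)
    have hlim : Tendsto (fun j => g (y.appr j) - g (x.appr j)) atTop (𝓝 (F y - F x)) :=
      (hF y).sub (hF x)
    have hle : ‖F y - F x‖ ≤ (p : ℝ) ^ (-(k : ℤ)) := by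
      apply le_of_tendsto hlim.norm
      filter_upwards [Filter.eventually_ge_atTop k] with j hj
      exact hgE k _ _ (hdvd2 y x k j j hj hj hxy)
    exact lt_of_le_of_lt hle hk
  · intro n
    have h2 : Tendsto (fun j => g ((n : ℤ_[p]).appr j) - g n) atTop (𝓝 0) := by
      apply squeeze_zero_norm _ htend0
      intro j
      apply hgE j
      rw [← PadicInt.norm_int_le_pow_iff_dvd]
      have hcast : ((((n : ℤ_[p]).appr j : ℤ) - (n : ℤ) : ℤ) : ℤ_[p])
          = (((n : ℤ_[p]).appr j : ℕ) : ℤ_[p]) - ((n : ℕ) : ℤ_[p]) := by push_cast; ring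
      rw [hcast, norm_sub_rev]
      exact happr (n : ℤ_[p]) j
    have h1 : Tendsto (fun j => g ((n : ℤ_[p]).appr j)) atTop (𝓝 (g n)) := by
      have h3 := h2.add (tendsto_const_nhds (x := g n))
      simpa using h3
    exact tendsto_nhds_unique (hF (n : ℤ_[p])) h1
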